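/- Let n ≥ 1 and let 0 ≤ i ≤ j ≤ n with i + j > n. If f : Σ_2^n → ℝ is a nonzero function in U_{[i,j]}(n,2), then the cardinality of the support of f is at least 2^{i}. -/

import Mathlib

/-- `f` belongs to the eigenspace `U_k(n,q)` of the Hamming graph `H(n,q)`,
i.e. `λ_k(n,q) · f(x) = Σ_{y ∈ N(x)} f(y)` for every vertex `x`, where
`λ_k(n,q) = n(q-1) - q·k` and `N(x)` is the set of vertices at Hamming distance 1 from `x`. -/
def inU (n q k : ℕ) (f : (Fin n → Fin q) → ℝ) : Prop :=
  ∀ x : Fin n → Fin q,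
    ((n : ℝ) * ((q : ℝ) - 1) - (q : ℝ) * (k : ℝ)) * f x =
      ∑ y ∈ Finset.univ.filter (fun y : Fin n → Fin q => hammingDist x y = 1), f y

/-- `f` belongs to the direct sum `U_{[i,j]}(n,q) = U_i(n,q) ⊕ … ⊕ U_j(n,q)`,
i.e. `f = Σ_{k=i}^{j} g_k` with `g_k ∈ U_k(n,q)`. -/
def inUIJ (n q i j : ℕ) (f : (Fin n → Fin q) → ℝ) : Prop :=
  ∃ g : ℕ → (Fin n → Fin q) → ℝ,
    (∀ k ∈ Finset.Icc i j, inU n q k (g k)) ∧ f = ∑ k ∈ Finset.Icc i j, g k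

/-- The cardinality of the support of `f`. -/
noncomputable def suppCard (n q : ℕ) (f : (Fin n → Fin q) → ℝ) : ℕ :=
  (Finset.univ.filter (fun x : Fin n → Fin q => f x ≠ 0)).card

/-! ### Auxiliary development -/

namespace Stmt2Aux

open Finset

/- Basic closure properties of `inU`. -/

lemma inU_zero (n q k : ℕ) : inU n q k (fun _ => 0) := by
  intro x; simp

lemma inU_add {n q k : ℕ} {f g : (Fin n → Fin q) → ℝ}
    (hf : inU n q k f) (hg : inU n q k g) :
    inU n q k (fun x => f x + g x) := by
  intro x
  rw [mul_add, hf x, hg x, Finset.sum_add_distrib]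

lemma inU_smul {n q k : ℕ} {f : (Fin n → Fin q) → ℝ} (c : ℝ) (hf : inU n q k f) :
    inU n q k (fun x => c * f x) := by
  intro x
  simp only
  rw [← Finset.mul_sum, ← hf x]; ring

/- Hamming distance and `Fin.cons`. -/

lemma hammingDist_cons {n : ℕ} (b b' : Fin 2) (x y : Fin n → Fin 2) :
    hammingDist (Fin.cons b x : Fin (n+1) → Fin 2) (Fin.cons b' y) =
      (if b = b' then 0 else 1) + hammingDist x y := by
  unfold hammingDist
  rw [Finset.card_filter, Finset.card_filter, Fin.sum_univ_succ]
  simp [Fin.cons_succ, ite_not]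

lemma fin2_ne {a b : Fin 2} (h : a ≠ b) : b = a + 1 := by
  fin_cases a <;> fin_cases b <;> simp_all

lemma dist_one_exists {n : ℕ} {x y : Fin n → Fin 2} (h : hammingDist x y = 1) :
    ∃ t : Fin n, y = Function.update x t (x t + 1) := by
  unfold hammingDist at h
  rw [Finset.card_eq_one] at h
  obtain ⟨t, ht⟩ := h
  refine ⟨t, funext fun i => ?_⟩
  by_cases hi : i = t
  · subst hi
    have : i ∈ ({t | x t ≠ y t} : Finset (Fin n)) := by rw [ht]; exact Finset.mem_singleton_self i
    simp only [Finset.mem_filter] at this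
    rw [Function.update_self]
    exact fin2_ne this.2
  · have : i ∉ ({t | x t ≠ y t} : Finset (Fin n)) := by rw [ht]; simpa using hi
    simp only [Finset.mem_filter, Finset.mem_univ, true_and, not_not] at this
    rw [Function.update_of_ne hi]
    exact this.symm

lemma neighbor_card_le {n : ℕ} (x : Fin n → Fin 2) :
    (Finset.univ.filter fun y => hammingDist x y = 1).card ≤ n := by
  calc (Finset.univ.filter fun y => hammingDist x y = 1).card
      ≤ (Finset.univ.image fun t : Fin n => Function.update x t (x t + 1)).card := by
        apply Finset.card_le_card
        intro y hy
        simp only [Finset.mem_filter] at hy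
        obtain ⟨t, ht⟩ := dist_one_exists hy.2
        exact Finset.mem_image.2 ⟨t, Finset.mem_univ t, ht.symm⟩
    _ ≤ (Finset.univ : Finset (Fin n)).card := Finset.card_image_le
    _ = n := by simp

/- A "too large eigenvalue" forces the zero function. -/

lemma spectral {n : ℕ} (h : (Fin n → Fin 2) → ℝ) (c : ℝ) (hc : (n : ℝ) < c)
    (he : ∀ x, c * h x =
      ∑ y ∈ Finset.univ.filter (fun y : Fin n → Fin 2 => hammingDist x y = 1), h y) :
    h = 0 := by
  obtain ⟨x0, -, hx0⟩ := Finset.exists_max_image Finset.univ (fun x => |h x|)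
    ⟨fun _ => 0, Finset.mem_univ _⟩
  have key : c * |h x0| ≤ (n : ℝ) * |h x0| := by
    calc c * |h x0| = |c * h x0| := by
          rw [abs_mul, abs_of_pos (lt_of_le_of_lt (Nat.cast_nonneg n) hc)]
      _ = |∑ y ∈ Finset.univ.filter (fun y : Fin n → Fin 2 => hammingDist x0 y = 1), h y| := by
          rw [he x0]
      _ ≤ ∑ y ∈ Finset.univ.filter (fun y : Fin n → Fin 2 => hammingDist x0 y = 1), |h y| :=
          Finset.abs_sum_le_sum_abs _ _
      _ ≤ ∑ y ∈ Finset.univ.filter (fun y : Fin n → Fin 2 => hammingDist x0 y = 1), |h x0| :=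
          Finset.sum_le_sum fun y _ => hx0 y (Finset.mem_univ y)
      _ = ((Finset.univ.filter fun y => hammingDist x0 y = 1).card : ℝ) * |h x0| := by
          rw [Finset.sum_const, nsmul_eq_mul]
      _ ≤ (n : ℝ) * |h x0| := by
          apply mul_le_mul_of_nonneg_right _ (abs_nonneg _)
          exact_mod_cast neighbor_card_le x0
  have hle : |h x0| ≤ 0 := by nlinarith
  funext x
  have := le_trans (hx0 x (Finset.mem_univ x)) hle
  simpa [abs_nonpos_iff] using this

/- Splitting the neighbour sum along the first coordinate. -/

lemma slice_sum {n : ℕ} (g : (Fin (n+1) → Fin 2) → ℝ) (b : Fin 2) (x : Fin n → Fin 2) :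
    ∑ y ∈ Finset.univ.filter
        (fun y : Fin (n+1) → Fin 2 => hammingDist (Fin.cons b x : Fin (n+1) → Fin 2) y = 1), g y
      = g (Fin.cons (b+1) x) +
        ∑ y ∈ Finset.univ.filter (fun y : Fin n → Fin 2 => hammingDist x y = 1),
          g (Fin.cons b y) := by
  rw [Finset.sum_filter, Finset.sum_filter]
  rw [← Fintype.sum_equiv (Fin.consEquiv fun _ : Fin (n+1) => Fin 2)
    (fun p : Fin 2 × (Fin n → Fin 2) =>
      if hammingDist (Fin.cons b x : Fin (n+1) → Fin 2) (Fin.cons p.1 p.2) = 1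
        then g (Fin.cons p.1 p.2) else 0)
    (fun y => if hammingDist (Fin.cons b x : Fin (n+1) → Fin 2) y = 1 then g y else 0)
    (fun p => rfl)]
  rw [Fintype.sum_prod_type, Fin.sum_univ_two]
  simp only [hammingDist_cons]
  fin_cases b
  · norm_num
    ring
  · norm_num
    have h2 : (2 : Fin 2) = 0 := by decide
    rw [show (1 + 1 : Fin 2) = 0 from rfl]

/- Restriction of an eigenfunction along the first coordinate. -/

lemma inU_slices {n k : ℕ} {g : (Fin (n+1) → Fin 2) → ℝ} (hg : inU (n+1) 2 k g) :
    inU n 2 k (fun x => g (Fin.cons 0 x) + g (Fin.cons 1 x)) ∧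
    (k = 0 → (fun x : Fin n → Fin 2 => g (Fin.cons 0 x) - g (Fin.cons 1 x)) = fun _ => 0) ∧
    (1 ≤ k → inU n 2 (k-1) (fun x => g (Fin.cons 0 x) - g (Fin.cons 1 x))) := by
  have h2 : (2 : Fin 2) = 0 := by decide
  have eq0 : ∀ x : Fin n → Fin 2,
      ((n:ℝ) + 1 - 2 * k) * g (Fin.cons 0 x) = g (Fin.cons 1 x) +
        ∑ y ∈ Finset.univ.filter (fun y : Fin n → Fin 2 => hammingDist x y = 1),
          g (Fin.cons 0 y) := by
    intro x
    have h := hg (Fin.cons 0 x)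
    rw [slice_sum] at h
    rw [show ((0:Fin 2) + 1) = 1 from rfl] at h
    push_cast at h
    linarith [h]
  have eq1 : ∀ x : Fin n → Fin 2,
      ((n:ℝ) + 1 - 2 * k) * g (Fin.cons 1 x) = g (Fin.cons 0 x) +
        ∑ y ∈ Finset.univ.filter (fun y : Fin n → Fin 2 => hammingDist x y = 1),
          g (Fin.cons 1 y) := by
    intro x
    have h := hg (Fin.cons 1 x)
    rw [slice_sum] at h
    rw [show ((1:Fin 2) + 1) = 2 from rfl, h2] at h
    push_cast at h
    linarith [h]
  have hdiff : ∀ x : Fin n → Fin 2,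
      ((n:ℝ) + 2 - 2 * k) * (g (Fin.cons 0 x) - g (Fin.cons 1 x)) =
        ∑ y ∈ Finset.univ.filter (fun y : Fin n → Fin 2 => hammingDist x y = 1),
          (g (Fin.cons 0 y) - g (Fin.cons 1 y)) := by
    intro x
    rw [Finset.sum_sub_distrib]
    linear_combination eq0 x - eq1 x
  refine ⟨?_, ?_, ?_⟩
  · intro x
    simp only
    rw [Finset.sum_add_distrib]
    push_cast
    linear_combination eq0 x + eq1 x
  · intro hk
    subst hk
    apply spectral _ ((n:ℝ) + 2) (by linarith)
    intro x
    have := hdiff x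
    push_cast at this ⊢
    linarith [this]
  · intro hk
    intro x
    have := hdiff x
    push_cast [Nat.cast_sub hk]
    push_cast at this
    linarith [this]

/- The class `PP n d` of sums of eigenfunctions of levels `≤ d`. -/

def PP (n d : ℕ) (f : (Fin n → Fin 2) → ℝ) : Prop :=
  ∃ g : ℕ → (Fin n → Fin 2) → ℝ, (∀ k, k ≤ d → inU n 2 k (g k)) ∧
    ∀ x, f x = ∑ k ∈ Finset.range (d+1), g k x

lemma PP_zero (n d : ℕ) : PP n d (fun _ => 0) :=
  ⟨fun _ _ => 0, fun _ _ => inU_zero n 2 _, fun x => by simp⟩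

lemma PP_add {n d : ℕ} {f g : (Fin n → Fin 2) → ℝ} (hf : PP n d f) (hg : PP n d g) :
    PP n d (fun x => f x + g x) := by
  obtain ⟨u, hu, hfu⟩ := hf
  obtain ⟨v, hv, hgv⟩ := hg
  refine ⟨fun k x => u k x + v k x, fun k hk => inU_add (hu k hk) (hv k hk), fun x => ?_⟩
  show f x + g x = ∑ k ∈ Finset.range (d+1), (u k x + v k x)
  rw [hfu x, hgv x, Finset.sum_add_distrib]

lemma PP_single {n d k : ℕ} {f : (Fin n → Fin 2) → ℝ} (hf : inU n 2 k f) (hk : k ≤ d) :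
    PP n d f := by
  refine ⟨fun m => if m = k then f else fun _ => 0, fun m hm => ?_, fun x => ?_⟩
  · by_cases h : m = k
    · subst h; simpa using hf
    · simp only [h, if_neg, if_false]
      exact inU_zero n 2 m
  · rw [show (∑ m ∈ Finset.range (d+1), (if m = k then f else fun _ => 0) x) =
        ∑ m ∈ Finset.range (d+1), (if m = k then f x else 0) from
      Finset.sum_congr rfl fun m _ => by split <;> rfl]
    rw [Finset.sum_ite_eq' (Finset.range (d+1)) k (fun _ => f x)]
    simp [Nat.lt_succ_of_le hk]

/- Restrictions of a `PP` function along the first coordinate. -/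

lemma PP_slices {n d : ℕ} {f : (Fin (n+1) → Fin 2) → ℝ} (hf : PP (n+1) d f) :
    PP n d (fun x => f (Fin.cons 0 x)) ∧
    PP n d (fun x => f (Fin.cons 1 x)) ∧
    (1 ≤ d → PP n (d-1) (fun x => f (Fin.cons 0 x) - f (Fin.cons 1 x))) ∧
    (d = 0 → ∀ x, f (Fin.cons 0 x) = f (Fin.cons 1 x)) := by
  obtain ⟨g, hg, hfg⟩ := hf
  set s : ℕ → (Fin n → Fin 2) → ℝ :=
    fun k x => g k (Fin.cons 0 x) + g k (Fin.cons 1 x) with hs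
  set t : ℕ → (Fin n → Fin 2) → ℝ :=
    fun k x => g k (Fin.cons 0 x) - g k (Fin.cons 1 x) with ht
  have hsU : ∀ k, k ≤ d → inU n 2 k (s k) := fun k hk => (inU_slices (hg k hk)).1
  have ht0 : t 0 = fun _ => 0 := by
    by_cases h0 : 0 ≤ d
    · exact (inU_slices (hg 0 h0)).2.1 rfl
    · omega
  have htU : ∀ k, 1 ≤ k → k ≤ d → inU n 2 (k-1) (t k) :=
    fun k h1 hk => (inU_slices (hg k hk)).2.2 h1
  have tsum : ∀ x, (∑ k ∈ Finset.range (d+1), t k x) = ∑ m ∈ Finset.range d, t (m+1) x := by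
    intro x
    rw [Finset.sum_range_succ']
    have : t 0 x = 0 := by rw [ht0]
    rw [this, add_zero]
  have key : ∀ b : Fin 2, ∀ e : ℝ, (∀ k x, g k (Fin.cons b x) = (s k x + e * t k x) / 2) →
      PP n d (fun x => f (Fin.cons b x)) := by
    intro b e hbe
    refine ⟨fun m x => (s m x + (if m < d then e * t (m+1) x else 0)) / 2, fun m hm => ?_, ?_⟩
    · have : inU n 2 m (fun x => s m x + (if m < d then e * t (m+1) x else 0)) := by
        apply inU_add (hsU m hm)
        by_cases hmd : m < d
        · simp only [hmd, if_true]
          have := htU (m+1) (by omega) (by omega)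
          simpa using inU_smul e this
        · simp only [hmd, if_false]
          exact inU_zero n 2 m
      have h2 := inU_smul (1/2 : ℝ) this
      show inU n 2 m (fun x => (s m x + (if m < d then e * t (m+1) x else 0)) / 2)
      have heq : (fun x => (s m x + (if m < d then e * t (m+1) x else 0)) / 2) =
          (fun x => (1/2 : ℝ) * (s m x + (if m < d then e * t (m+1) x else 0))) := by
        funext x; ring
      rw [heq]
      exact h2
    · intro x
      show f (Fin.cons b x) =
        ∑ k ∈ Finset.range (d+1), (s k x + (if k < d then e * t (k+1) x else 0)) / 2
      have lhs : f (Fin.cons b x) = ∑ k ∈ Finset.range (d+1), (s k x + e * t k x) / 2 := by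
        rw [hfg (Fin.cons b x)]
        exact Finset.sum_congr rfl fun k _ => by rw [hbe k x]
      have hr : (∑ m ∈ Finset.range (d+1), (if m < d then e * t (m+1) x else 0)) =
          e * ∑ m ∈ Finset.range d, t (m+1) x := by
        rw [Finset.sum_range_succ, if_neg (lt_irrefl d), add_zero, Finset.mul_sum]
        exact Finset.sum_congr rfl fun m hm => if_pos (Finset.mem_range.1 hm)
      rw [lhs]
      rw [show (∑ k ∈ Finset.range (d+1), (s k x + e * t k x) / 2) =
          (∑ k ∈ Finset.range (d+1), s k x) / 2 + e * (∑ k ∈ Finset.range (d+1), t k x) / 2 by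
        rw [Finset.sum_div, Finset.mul_sum, Finset.sum_div, ← Finset.sum_add_distrib]
        exact Finset.sum_congr rfl fun k _ => by ring]
      rw [show (∑ k ∈ Finset.range (d+1), (s k x + (if k < d then e * t (k+1) x else 0)) / 2) =
          (∑ k ∈ Finset.range (d+1), s k x) / 2 +
            (∑ k ∈ Finset.range (d+1), (if k < d then e * t (k+1) x else 0)) / 2 by
        rw [Finset.sum_div, Finset.sum_div, ← Finset.sum_add_distrib]
        exact Finset.sum_congr rfl fun k _ => by ring]
      rw [hr, tsum x]
  have hdiff : ∀ x, f (Fin.cons 0 x) - f (Fin.cons 1 x) = ∑ m ∈ Finset.range d, t (m+1) x := by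
    intro x
    rw [← tsum x, hfg (Fin.cons 0 x), hfg (Fin.cons 1 x), ← Finset.sum_sub_distrib]
  refine ⟨?_, ?_, ?_, ?_⟩
  · exact key 0 1 (fun k x => by simp only [hs, ht]; ring)
  · exact key 1 (-1) (fun k x => by simp only [hs, ht]; ring)
  · intro hd
    refine ⟨fun m => t (m+1), fun m hm => ?_, fun x => ?_⟩
    · have := htU (m+1) (by omega) (by omega)
      simpa using this
    · show f (Fin.cons 0 x) - f (Fin.cons 1 x) = ∑ k ∈ Finset.range (d-1+1), t (k+1) x
      rw [show d - 1 + 1 = d from Nat.succ_pred_eq_of_pos hd, hdiff x]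
  · intro hd
    intro x
    have := hdiff x
    rw [hd] at this
    simp at this
    linarith [this]

/- Counting the support along the first coordinate. -/

lemma suppCard_cons {n : ℕ} (f : (Fin (n+1) → Fin 2) → ℝ) :
    suppCard (n+1) 2 f =
      suppCard n 2 (fun x => f (Fin.cons 0 x)) + suppCard n 2 (fun x => f (Fin.cons 1 x)) := by
  unfold suppCard
  rw [Finset.card_filter, Finset.card_filter, Finset.card_filter]
  rw [← Fintype.sum_equiv (Fin.consEquiv fun _ : Fin (n+1) => Fin 2)
    (fun p : Fin 2 × (Fin n → Fin 2) => if f (Fin.cons p.1 p.2) ≠ 0 then 1 else 0)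
    (fun y => if f y ≠ 0 then 1 else 0)
    (fun p => rfl)]
  rw [Fintype.sum_prod_type, Fin.sum_univ_two]

lemma ne_zero_slice {n : ℕ} {f : (Fin (n+1) → Fin 2) → ℝ} (hf : f ≠ 0) :
    ¬((fun x => f (Fin.cons 0 x)) = (fun _ => 0) ∧ (fun x => f (Fin.cons 1 x)) = (fun _ => 0)) := by
  rintro ⟨h0, h1⟩
  apply hf
  funext z
  have hz : z = Fin.cons (z 0) (Fin.tail z) := (Fin.cons_self_tail z).symm
  have hb : z 0 = 0 ∨ z 0 = 1 := by
    have : ∀ b : Fin 2, b = 0 ∨ b = 1 := by decide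
    exact this (z 0)
  rcases hb with hb | hb
  · rw [hz, hb]
    exact congrFun h0 (Fin.tail z)
  · rw [hz, hb]
    exact congrFun h1 (Fin.tail z)

/- The support bound for `PP` functions. -/

lemma suppCard_pos {n : ℕ} {f : (Fin n → Fin 2) → ℝ} (hf : f ≠ 0) :
    1 ≤ suppCard n 2 f := by
  rw [Nat.one_le_iff_ne_zero]
  intro h
  apply hf
  funext x
  by_contra hx
  have : x ∈ Finset.univ.filter (fun x : Fin n → Fin 2 => f x ≠ 0) := by
    simp only [Finset.mem_filter, Finset.mem_univ, true_and]
    simpa using hx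
  rw [Finset.card_eq_zero.1 h] at this
  exact absurd this (Finset.notMem_empty x)

lemma PP_support : ∀ n d : ℕ, ∀ f : (Fin n → Fin 2) → ℝ,
    PP n d f → f ≠ 0 → 2 ^ (n - d) ≤ suppCard n 2 f := by
  intro n
  induction n with
  | zero =>
    intro d f _ hne
    simpa [Nat.zero_sub] using suppCard_pos hne
  | succ n ih =>
    intro d f hP hne
    obtain ⟨h0, h1, hdiff, heq⟩ := PP_slices hP
    rw [suppCard_cons f]
    rcases Nat.eq_zero_or_pos d with hd | hd
    · -- d = 0 : both slices coincide and are nonzero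
      have hcoinc := heq hd
      have hslices := ne_zero_slice hne
      have hne0 : (fun x => f (Fin.cons 0 x)) ≠ (fun _ : Fin n → Fin 2 => 0) := by
        intro hc
        apply hslices
        refine ⟨hc, funext fun x => ?_⟩
        rw [← hcoinc x]
        exact congrFun hc x
      have hne1 : (fun x => f (Fin.cons 1 x)) ≠ (fun _ : Fin n → Fin 2 => 0) := by
        intro hc
        apply hslices
        refine ⟨funext fun x => ?_, hc⟩
        rw [hcoinc x]
        exact congrFun hc x
      have c0 := ih d _ h0 hne0
      have c1 := ih d _ h1 hne1
      subst hd
      have : 2 ^ (n + 1) ≤ suppCard n 2 (fun x => f (Fin.cons 0 x)) +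
          suppCard n 2 (fun x => f (Fin.cons 1 x)) := by
        simp only [Nat.sub_zero] at c0 c1
        calc 2 ^ (n+1) = 2 ^ n + 2 ^ n := by ring
          _ ≤ _ := Nat.add_le_add c0 c1
      simpa using this
    · -- d ≥ 1
      have hdiffP := hdiff hd
      by_cases hf0 : (fun x => f (Fin.cons 0 x)) = (fun _ : Fin n → Fin 2 => 0)
      · -- slice 0 vanishes, so the difference is (minus) slice 1
        have hne1 : (fun x => f (Fin.cons 1 x)) ≠ (fun _ : Fin n → Fin 2 => 0) := by
          intro hc; exact ne_zero_slice hne ⟨hf0, hc⟩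
        have hdne : (fun x => f (Fin.cons 0 x) - f (Fin.cons 1 x)) ≠
            (fun _ : Fin n → Fin 2 => 0) := by
          intro hc
          apply hne1
          funext x
          have h1 := congrFun hc x
          have h2 := congrFun hf0 x
          linarith
        have cd := ih (d-1) _ hdiffP hdne
        have hsupp_eq : suppCard n 2 (fun x => f (Fin.cons 0 x) - f (Fin.cons 1 x)) =
            suppCard n 2 (fun x => f (Fin.cons 1 x)) := by
          unfold suppCard
          congr 1
          apply Finset.filter_congr
          intro x _
          have h2 := congrFun hf0 x
          simp [h2]
        rw [hsupp_eq] at cd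
        calc 2 ^ (n + 1 - d) ≤ 2 ^ (n - (d-1)) :=
              Nat.pow_le_pow_right (by norm_num) (by omega)
          _ ≤ suppCard n 2 (fun x => f (Fin.cons 1 x)) := cd
          _ ≤ _ := Nat.le_add_left _ _
      · by_cases hf1 : (fun x => f (Fin.cons 1 x)) = (fun _ : Fin n → Fin 2 => 0)
        · have hdne : (fun x => f (Fin.cons 0 x) - f (Fin.cons 1 x)) ≠
              (fun _ : Fin n → Fin 2 => 0) := by
            intro hc
            apply hf0
            funext x
            have h1 := congrFun hc x
            have h2 := congrFun hf1 x
            linarith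
          have cd := ih (d-1) _ hdiffP hdne
          have hsupp_eq : suppCard n 2 (fun x => f (Fin.cons 0 x) - f (Fin.cons 1 x)) =
              suppCard n 2 (fun x => f (Fin.cons 0 x)) := by
            unfold suppCard
            congr 1
            apply Finset.filter_congr
            intro x _
            have h2 := congrFun hf1 x
            simp [h2]
          rw [hsupp_eq] at cd
          calc 2 ^ (n + 1 - d) ≤ 2 ^ (n - (d-1)) :=
                Nat.pow_le_pow_right (by norm_num) (by omega)
            _ ≤ suppCard n 2 (fun x => f (Fin.cons 0 x)) := cd
            _ ≤ _ := Nat.le_add_right _ _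
        · have c0 := ih d _ h0 hf0
          have c1 := ih d _ h1 hf1
          calc 2 ^ (n + 1 - d) ≤ 2 ^ (n - d + 1) :=
                Nat.pow_le_pow_right (by norm_num) (by omega)
            _ = 2 ^ (n - d) + 2 ^ (n - d) := by ring
            _ ≤ _ := Nat.add_le_add c0 c1

/- The parity twist. -/

def eps {n : ℕ} (x : Fin n → Fin 2) : ℝ :=
  ∏ t, (if x t = 0 then (1:ℝ) else -1)

lemma eps_ne_zero {n : ℕ} (x : Fin n → Fin 2) : eps x ≠ 0 := by
  unfold eps
  apply Finset.prod_ne_zero_iff.2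
  intro t _
  split <;> norm_num

lemma eps_dist_one {n : ℕ} {x y : Fin n → Fin 2} (h : hammingDist x y = 1) :
    eps y = - eps x := by
  obtain ⟨t0, ht0⟩ := dist_one_exists h
  unfold eps
  rw [← Finset.mul_prod_erase Finset.univ _ (Finset.mem_univ t0),
      ← Finset.mul_prod_erase Finset.univ
        (fun t => (if x t = 0 then (1:ℝ) else -1)) (Finset.mem_univ t0)]
  have hrest : ∏ t ∈ Finset.univ.erase t0, (if y t = 0 then (1:ℝ) else -1) =
      ∏ t ∈ Finset.univ.erase t0, (if x t = 0 then (1:ℝ) else -1) := by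
    apply Finset.prod_congr rfl
    intro t ht
    have : y t = x t := by
      rw [ht0, Function.update_of_ne (Finset.ne_of_mem_erase ht)]
    rw [this]
  rw [hrest]
  have hfac : (if y t0 = 0 then (1:ℝ) else -1) = -(if x t0 = 0 then (1:ℝ) else -1) := by
    have hy : y t0 = x t0 + 1 := by rw [ht0, Function.update_self]
    rw [hy]
    have : ∀ b : Fin 2, (if b + 1 = 0 then (1:ℝ) else -1) = -(if b = 0 then (1:ℝ) else -1) := by
      intro b
      have hb : b = 0 ∨ b = 1 := by
        have : ∀ c : Fin 2, c = 0 ∨ c = 1 := by decide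
        exact this b
      rcases hb with hb | hb <;> subst hb
      · rw [show ((0:Fin 2) + 1) = 1 from rfl]
        norm_num
      · rw [show ((1:Fin 2) + 1) = 0 from rfl]
        norm_num
    exact this (x t0)
  rw [hfac]
  ring

lemma inU_twist {n k : ℕ} (hk : k ≤ n) {g : (Fin n → Fin 2) → ℝ} (hg : inU n 2 k g) :
    inU n 2 (n - k) (fun x => eps x * g x) := by
  intro x
  have hsum : ∑ y ∈ Finset.univ.filter (fun y : Fin n → Fin 2 => hammingDist x y = 1),
      eps y * g y = (-(eps x)) *
        ∑ y ∈ Finset.univ.filter (fun y : Fin n → Fin 2 => hammingDist x y = 1), g y := by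
    rw [Finset.mul_sum]
    apply Finset.sum_congr rfl
    intro y hy
    have hd : hammingDist x y = 1 := (Finset.mem_filter.1 hy).2
    rw [eps_dist_one hd]
  simp only
  rw [hsum, ← hg x]
  push_cast [Nat.cast_sub hk]
  ring

/- Sums of `PP` functions. -/

lemma PP_sum {n d : ℕ} (s : Finset ℕ) (h : ℕ → (Fin n → Fin 2) → ℝ)
    (hh : ∀ k ∈ s, PP n d (h k)) :
    PP n d (fun x => ∑ k ∈ s, h k x) := by
  induction s using Finset.cons_induction with
  | empty => simpa using PP_zero n d
  | cons a s ha ih =>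
    have h1 := PP_add (hh a (Finset.mem_cons_self a s))
      (ih fun k hk => hh k (Finset.mem_cons_of_mem hk))
    have hgoal : (fun x => ∑ k ∈ Finset.cons a s ha, h k x) =
        fun x => h a x + ∑ k ∈ s, h k x := by
      funext x; rw [Finset.sum_cons]
    rw [hgoal]
    exact h1

end Stmt2Aux

open Stmt2Aux in
/-- If `0 ≤ i ≤ j ≤ n`, `i + j > n` and `f` is a nonzero function in `U_{[i,j]}(n,2)`,
then `|Supp(f)| ≥ 2^{i}`. -/
theorem stmt2 (n i j : ℕ) (hn : 1 ≤ n) (hij : i ≤ j) (hjn : j ≤ n) (hsum : n < i + j)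
    (f : (Fin n → Fin 2) → ℝ) (hf : inUIJ n 2 i j f) (hne : f ≠ 0) :
    2 ^ i ≤ suppCard n 2 f := by
  obtain ⟨g, hgU, hgf⟩ := hf
  have hin : i ≤ n := le_trans hij hjn
  set F : (Fin n → Fin 2) → ℝ := fun x => eps x * f x with hF
  have hPP : PP n (n - i) F := by
    have : F = fun x => ∑ k ∈ Finset.Icc i j, eps x * g k x := by
      funext x
      rw [hF]
      simp only
      rw [hgf, Finset.sum_apply, Finset.mul_sum]
    rw [this]
    apply PP_sum
    intro k hk
    have hk' := Finset.mem_Icc.1 hk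
    have hkn : k ≤ n := le_trans hk'.2 hjn
    exact PP_single (inU_twist hkn (hgU k hk)) (Nat.sub_le_sub_left hk'.1 n)
  have hFne : F ≠ 0 := by
    intro hc
    apply hne
    funext x
    have := congrFun hc x
    simp only [hF, Pi.zero_apply] at this ⊢
    exact (mul_eq_zero.1 this).resolve_left (eps_ne_zero x)
  have hsupp : suppCard n 2 F = suppCard n 2 f := by
    unfold suppCard
    congr 1
    apply Finset.filter_congr
    intro x _
    simp only [hF]
    constructor
    · intro h hc
      exact h (by rw [hc, mul_zero])
    · intro h
      exact mul_ne_zero (eps_ne_zero x) h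
  have := PP_support n (n - i) F hPP hFne
  rw [hsupp] at this
  have hexp : n - (n - i) = i := by omega
  rw [hexp] at this
  exact this
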